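/- Let (Ω, 𝓕) be a measurable space, let K_∞ be a Markov kernel on Ω with invariant probability measure π (i.e., πK_∞ = π), and suppose K_∞ is uniformly ergodic: there exist constants C < ∞ and ρ ∈ (0,1) such that sup_{x ∈ Ω} ‖K_∞^t(x,·) − π‖_TV ≤ C ρ^t for all t ∈ ℕ. Let (K_t)_{t ∈ ℕ} be a sequence of Markov kernels on Ω such that δ_t := sup_{x ∈ Ω} ‖K_t(x,·) − K_∞(x,·)‖_TV satisfies δ_t → 0 as t → ∞. Let μ_0 be any probability measure on Ω and define recursively μ_{t+1} = μ_t K_t (the law of the inhomogeneous Markov chain whose step-t transition kernel is K_t). Then ‖μ_t − π‖_TV → 0 as t → ∞. -/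

import Mathlib

open MeasureTheory ProbabilityTheory Filter

/-- Total variation distance between two measures:
`‖μ − ν‖_TV = sup_{A measurable} |μ(A) − ν(A)|`. -/
noncomputable def tvDist {Ω : Type*} [MeasurableSpace Ω] (μ ν : Measure Ω) : ℝ :=
  ⨆ A : {s : Set Ω // MeasurableSet s}, |(μ A.1).toReal - (ν A.1).toReal|

/-- `t`-step iterate of a Markov kernel. -/
noncomputable def kernelIter {Ω : Type*} [MeasurableSpace Ω]
    (K : Kernel Ω Ω) : ℕ → Kernel Ω Ω
  | 0 => Kernel.id
  | (n + 1) => K.comp (kernelIter K n)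

section Aux

variable {Ω : Type*} [MeasurableSpace Ω]

instance : Nonempty {s : Set Ω // MeasurableSet s} := ⟨⟨∅, MeasurableSet.empty⟩⟩

lemma measure_toReal_le_one (μ : Measure Ω) [IsProbabilityMeasure μ] (A : Set Ω) :
    (μ A).toReal ≤ 1 := by
  have := ENNReal.toReal_mono (by simp : (1 : ENNReal) ≠ ⊤) (prob_le_one (μ := μ) (s := A))
  simpa using this

lemma tvDist_bddAbove (μ ν : Measure Ω) [IsProbabilityMeasure μ] [IsProbabilityMeasure ν] :
    BddAbove (Set.range fun A : {s : Set Ω // MeasurableSet s} =>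
      |(μ A.1).toReal - (ν A.1).toReal|) := by
  refine ⟨2, ?_⟩
  rintro x ⟨A, rfl⟩
  have h1 := measure_toReal_le_one μ A.1
  have h2 := measure_toReal_le_one ν A.1
  have h3 : (0:ℝ) ≤ (μ A.1).toReal := ENNReal.toReal_nonneg
  have h4 : (0:ℝ) ≤ (ν A.1).toReal := ENNReal.toReal_nonneg
  rw [abs_sub_le_iff]
  constructor <;> linarith

lemma abs_measure_sub_le_tvDist (μ ν : Measure Ω) [IsProbabilityMeasure μ]
    [IsProbabilityMeasure ν] {A : Set Ω} (hA : MeasurableSet A) :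
    |(μ A).toReal - (ν A).toReal| ≤ tvDist μ ν :=
  le_ciSup (tvDist_bddAbove μ ν) ⟨A, hA⟩

lemma tvDist_nonneg (μ ν : Measure Ω) [IsProbabilityMeasure μ] [IsProbabilityMeasure ν] :
    0 ≤ tvDist μ ν :=
  (abs_nonneg _).trans (abs_measure_sub_le_tvDist μ ν MeasurableSet.empty)

lemma tvDist_le_two (μ ν : Measure Ω) [IsProbabilityMeasure μ] [IsProbabilityMeasure ν] :
    tvDist μ ν ≤ 2 := by
  refine ciSup_le fun A => ?_
  have h1 := measure_toReal_le_one μ A.1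
  have h2 := measure_toReal_le_one ν A.1
  have h3 : (0:ℝ) ≤ (μ A.1).toReal := ENNReal.toReal_nonneg
  have h4 : (0:ℝ) ≤ (ν A.1).toReal := ENNReal.toReal_nonneg
  rw [abs_sub_le_iff]
  constructor <;> linarith

lemma tvDist_triangle (μ ν ξ : Measure Ω) [IsProbabilityMeasure μ] [IsProbabilityMeasure ν]
    [IsProbabilityMeasure ξ] : tvDist μ ξ ≤ tvDist μ ν + tvDist ν ξ := by
  refine ciSup_le fun A => ?_
  refine (abs_sub_le _ (ν A.1).toReal _).trans (add_le_add ?_ ?_)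
  · exact abs_measure_sub_le_tvDist μ ν A.2
  · exact abs_measure_sub_le_tvDist ν ξ A.2


lemma abs_integral_le' {α : Type*} [MeasurableSpace α] (μ : Measure α) (f : α → ℝ) :
    |∫ x, f x ∂μ| ≤ ∫ x, |f x| ∂μ := by
  simpa [Real.norm_eq_abs] using norm_integral_le_integral_norm (μ := μ) f

/-- Core lemma: difference of integrals of a `[0,1]`-valued function is bounded by TV
distance, via the layer cake formula. -/
lemma abs_lintegral_sub_le (α β : Measure Ω) [IsProbabilityMeasure α] [IsProbabilityMeasure β]
    (g : Ω → ENNReal) (hg : Measurable g) (hg1 : ∀ x, g x ≤ 1) :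
    |(∫⁻ x, g x ∂α).toReal - (∫⁻ x, g x ∂β).toReal| ≤ tvDist α β := by
  set f : Ω → ℝ := fun x => (g x).toReal with hfdef
  have hf : Measurable f := hg.ennreal_toReal
  have hf0 : ∀ x, 0 ≤ f x := fun x => ENNReal.toReal_nonneg
  have hf1 : ∀ x, f x ≤ 1 := fun x => by
    have := ENNReal.toReal_mono (by simp : (1 : ENNReal) ≠ ⊤) (hg1 x)
    simpa using this
  have hmbleS : ∀ t : ℝ, MeasurableSet {a | t < f a} := fun t => hf measurableSet_Ioi
  have hanti : ∀ m : Measure Ω, Measurable (fun t : ℝ => m {a | t < f a}) := fun m =>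
    Antitone.measurable (fun s t hst => measure_mono (fun a ha => lt_of_le_of_lt hst ha))
  have key : ∀ m : Measure Ω, ∫⁻ x, g x ∂m = ∫⁻ t in Set.Ioo (0:ℝ) 1, m {a | t < f a} := by
    intro m
    have h1 : ∫⁻ x, g x ∂m = ∫⁻ x, ENNReal.ofReal (f x) ∂m := by
      refine lintegral_congr fun x => ?_
      rw [hfdef]
      exact (ENNReal.ofReal_toReal (((hg1 x).trans_lt (by simp)).ne)).symm
    rw [h1, lintegral_eq_lintegral_meas_lt m (Filter.Eventually.of_forall hf0) hf.aemeasurable]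
    rw [← Set.Ioo_union_Ici_eq_Ioi (zero_lt_one (α := ℝ)),
      lintegral_union measurableSet_Ici (by
        rw [Set.disjoint_left]
        rintro t ⟨_, h1t⟩ h2t
        exact absurd h2t (not_le.2 h1t))]
    have hz : ∀ t ∈ Set.Ici (1:ℝ), m {a | t < f a} = (fun _ => (0 : ENNReal)) t := by
      intro t ht
      have : {a | t < f a} = (∅ : Set Ω) := by
        ext a
        simp only [Set.mem_setOf_eq, Set.mem_empty_iff_false, iff_false, not_lt]
        exact (hf1 a).trans ht
      simp [this]
    rw [setLIntegral_congr_fun measurableSet_Ici hz,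
      lintegral_zero, add_zero]
  have hIoo : (volume : Measure ℝ) (Set.Ioo (0:ℝ) 1) = 1 := by
    rw [Real.volume_Ioo]; norm_num
  have hint : ∀ (m : Measure Ω) [IsProbabilityMeasure m],
      Integrable (fun t => (m {a | t < f a}).toReal)
        (volume.restrict (Set.Ioo (0:ℝ) 1)) := by
    intro m _
    refine integrable_toReal_of_lintegral_ne_top (hanti m).aemeasurable ?_
    refine ne_of_lt (lt_of_le_of_lt (lintegral_mono fun t => prob_le_one) ?_)
    rw [lintegral_one, Measure.restrict_apply_univ, hIoo]
    simp
  have htoReal : ∀ (m : Measure Ω) [IsProbabilityMeasure m],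
      (∫⁻ t in Set.Ioo (0:ℝ) 1, m {a | t < f a}).toReal
        = ∫ t in Set.Ioo (0:ℝ) 1, (m {a | t < f a}).toReal := by
    intro m _
    exact (integral_toReal (hanti m).aemeasurable
      (Filter.Eventually.of_forall fun t => (prob_le_one).trans_lt (by simp))).symm
  rw [key α, key β, htoReal α, htoReal β, ← integral_sub (hint α) (hint β)]
  have habs : |∫ t in Set.Ioo (0:ℝ) 1,
        ((α {a | t < f a}).toReal - (β {a | t < f a}).toReal)|
      ≤ ∫ t in Set.Ioo (0:ℝ) 1,
        |(α {a | t < f a}).toReal - (β {a | t < f a}).toReal| :=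
    abs_integral_le' _ _
  refine habs.trans ?_
  have hmono : ∫ t in Set.Ioo (0:ℝ) 1,
        |(α {a | t < f a}).toReal - (β {a | t < f a}).toReal|
      ≤ ∫ _t in Set.Ioo (0:ℝ) 1, tvDist α β := by
    refine integral_mono_of_nonneg (Filter.Eventually.of_forall fun t => abs_nonneg _)
      (integrableOn_const (by rw [hIoo]; simp))
      (Filter.Eventually.of_forall fun t => ?_)
    exact abs_measure_sub_le_tvDist α β (hmbleS t)
  refine hmono.trans ?_
  rw [setIntegral_const, measureReal_def, hIoo]
  simp

/-- The bind of a probability measure with a Markov kernel is a probability measure. -/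
lemma isProbabilityMeasure_bind (μ : Measure Ω) [IsProbabilityMeasure μ]
    (κ : Kernel Ω Ω) [IsMarkovKernel κ] :
    IsProbabilityMeasure (μ.bind (fun x => κ x)) := by
  constructor
  rw [Measure.bind_apply MeasurableSet.univ κ.measurable.aemeasurable]
  simp

lemma integrable_kernel_toReal (μ : Measure Ω) [IsProbabilityMeasure μ]
    (κ : Kernel Ω Ω) [IsMarkovKernel κ] {A : Set Ω} (hA : MeasurableSet A) :
    Integrable (fun x => (κ x A).toReal) μ := by
  refine integrable_toReal_of_lintegral_ne_top (κ.measurable_coe hA).aemeasurable ?_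
  refine ne_of_lt (lt_of_le_of_lt (lintegral_mono fun x => prob_le_one) ?_)
  rw [lintegral_one, measure_univ]
  simp

/-- If two Markov kernels are pointwise within `D` in TV distance, so are the binds of a
probability measure with them. -/
lemma tvDist_bind_bind_le (μ : Measure Ω) [IsProbabilityMeasure μ]
    (κ η : Kernel Ω Ω) [IsMarkovKernel κ] [IsMarkovKernel η] {D : ℝ}
    (hD : ∀ x, tvDist (κ x) (η x) ≤ D) :
    tvDist (μ.bind (fun x => κ x)) (μ.bind (fun x => η x)) ≤ D := by
  refine ciSup_le fun A => ?_
  rw [Measure.bind_apply A.2 κ.measurable.aemeasurable, Measure.bind_apply A.2 η.measurable.aemeasurable]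
  have h1 : (∫⁻ x, κ x A.1 ∂μ).toReal = ∫ x, (κ x A.1).toReal ∂μ :=
    (integral_toReal (κ.measurable_coe A.2).aemeasurable
      (Filter.Eventually.of_forall fun x => measure_lt_top _ _)).symm
  have h2 : (∫⁻ x, η x A.1 ∂μ).toReal = ∫ x, (η x A.1).toReal ∂μ :=
    (integral_toReal (η.measurable_coe A.2).aemeasurable
      (Filter.Eventually.of_forall fun x => measure_lt_top _ _)).symm
  rw [h1, h2, ← integral_sub (integrable_kernel_toReal μ κ A.2)
    (integrable_kernel_toReal μ η A.2)]
  refine (abs_integral_le' _ _).trans ?_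
  have : ∫ x, |(κ x A.1).toReal - (η x A.1).toReal| ∂μ ≤ ∫ _x, D ∂μ := by
    refine integral_mono_of_nonneg (Filter.Eventually.of_forall fun x => abs_nonneg _)
      (integrable_const D) (Filter.Eventually.of_forall fun x => ?_)
    exact (abs_measure_sub_le_tvDist (κ x) (η x) A.2).trans (hD x)
  refine this.trans ?_
  simp

/-- TV contraction: pushing two probability measures through the same Markov kernel does
not increase their TV distance. -/
lemma tvDist_bind_le_tvDist (α β : Measure Ω) [IsProbabilityMeasure α] [IsProbabilityMeasure β]
    (L : Kernel Ω Ω) [IsMarkovKernel L] :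
    tvDist (α.bind (fun x => L x)) (β.bind (fun x => L x)) ≤ tvDist α β := by
  refine ciSup_le fun A => ?_
  rw [Measure.bind_apply A.2 L.measurable.aemeasurable, Measure.bind_apply A.2 L.measurable.aemeasurable]
  exact abs_lintegral_sub_le α β (fun x => L x A.1) (L.measurable_coe A.2)
    (fun x => prob_le_one)

/-- If a Markov kernel is pointwise within `D` of a fixed probability measure, so is the
bind of any probability measure with it. -/
lemma tvDist_bind_const_le (μ : Measure Ω) [IsProbabilityMeasure μ]
    (κ : Kernel Ω Ω) [IsMarkovKernel κ] (ν : Measure Ω) [IsProbabilityMeasure ν] {D : ℝ}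
    (hD : ∀ x, tvDist (κ x) ν ≤ D) :
    tvDist (μ.bind (fun x => κ x)) ν ≤ D := by
  have hbc : μ.bind (fun x => (Kernel.const Ω ν) x) = ν := by
    simp [Kernel.const_apply, Measure.bind_const]
  have := tvDist_bind_bind_le μ κ (Kernel.const Ω ν) (D := D) (fun x => by
    simpa [Kernel.const_apply] using hD x)
  rwa [hbc] at this

instance kernelIter_isMarkov (K : Kernel Ω Ω) [IsMarkovKernel K] (n : ℕ) :
    IsMarkovKernel (kernelIter K n) := by
  induction n with
  | zero => rw [kernelIter]; infer_instance
  | succ n ih => rw [kernelIter]; infer_instance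

lemma kernelIter_succ' (K : Kernel Ω Ω) [IsMarkovKernel K] (n : ℕ) :
    kernelIter K (n + 1) = (kernelIter K n).comp K := by
  induction n with
  | zero =>
    show K.comp Kernel.id = Kernel.id.comp K
    rw [Kernel.comp_id, Kernel.id_comp]
  | succ n ih =>
    show K.comp (kernelIter K (n + 1)) = (kernelIter K (n + 1)).comp K
    rw [ih, ← Kernel.comp_assoc,
      show K ∘ₖ kernelIter K n = kernelIter K (n + 1) from rfl, ih]

end Aux

/-- An inhomogeneous Markov chain whose step-`t` kernels converge uniformly in total
variation to a uniformly ergodic kernel `Kinf` with invariant distribution `π` has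
marginal laws converging to `π` in total variation. -/
theorem tv_convergence_of_uniformly_converging_kernels
    {Ω : Type*} [MeasurableSpace Ω]
    (Kinf : Kernel Ω Ω) [IsMarkovKernel Kinf]
    (π : Measure Ω) [IsProbabilityMeasure π]
    (hinv : π.bind (fun x => Kinf x) = π)
    (C ρ : ℝ) (hρ : ρ ∈ Set.Ioo (0 : ℝ) 1)
    (herg : ∀ t : ℕ, ∀ x : Ω, tvDist (kernelIter Kinf t x) π ≤ C * ρ ^ t)
    (K : ℕ → Kernel Ω Ω) [∀ t, IsMarkovKernel (K t)]
    (hδ : Tendsto (fun t : ℕ => ⨆ x : Ω, tvDist (K t x) (Kinf x)) atTop (nhds 0))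
    (μ₀ : Measure Ω) [IsProbabilityMeasure μ₀]
    (μ : ℕ → Measure Ω)
    (hμ₀ : μ 0 = μ₀)
    (hμ : ∀ t : ℕ, μ (t + 1) = (μ t).bind (fun x => (K t) x)) :
    Tendsto (fun t : ℕ => tvDist (μ t) π) atTop (nhds 0) := by
  classical
  have hΩ : Nonempty Ω := by
    by_contra h
    rw [not_nonempty_iff] at h
    have h1 : π Set.univ = 1 := measure_univ
    rw [Set.univ_eq_empty_iff.2 h, measure_empty] at h1
    exact zero_ne_one h1
  haveI hprob : ∀ t, IsProbabilityMeasure (μ t) := by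
    intro t
    induction t with
    | zero => rw [hμ₀]; infer_instance
    | succ t ih => rw [hμ t]; exact isProbabilityMeasure_bind (μ t) (K t)
  set δ : ℕ → ℝ := fun t => ⨆ x, tvDist (K t x) (Kinf x) with hδdef
  have hδle : ∀ t x, tvDist (K t x) (Kinf x) ≤ δ t := by
    intro t x
    have hbdd : BddAbove (Set.range fun y : Ω => tvDist (K t y) (Kinf y)) := by
      refine ⟨2, ?_⟩
      rintro _ ⟨y, rfl⟩
      exact tvDist_le_two _ _
    exact le_ciSup hbdd x
  -- Approximation lemma: n approximate steps vs n exact steps from time s.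
  have hT : ∀ n s, tvDist (μ (s + n)) ((μ s).bind (fun x => kernelIter Kinf n x))
      ≤ ∑ j ∈ Finset.range n, δ (s + j) := by
    intro n
    induction n with
    | zero =>
      intro s
      have hb : (μ s).bind (fun x => kernelIter Kinf 0 x) = μ s := by
        show (μ s).bind (fun x => Kernel.id x) = μ s
        simp only [Kernel.id_apply]
        exact Measure.bind_dirac
      rw [Nat.add_zero, hb, Finset.range_zero, Finset.sum_empty]
      exact ciSup_le fun A => by simp
    | succ n ih =>
      intro s
      haveI := isProbabilityMeasure_bind (μ (s + 1)) (kernelIter Kinf n)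
      haveI := isProbabilityMeasure_bind (μ s) (kernelIter Kinf (n + 1))
      have e1 : s + (n + 1) = (s + 1) + n := by omega
      have hmid : (μ (s + 1)).bind (fun x => kernelIter Kinf n x)
          = (μ s).bind (fun x => ((kernelIter Kinf n).comp (K s)) x) := by
        rw [hμ s, Measure.bind_bind ((K s).measurable.aemeasurable) ((kernelIter Kinf n).measurable.aemeasurable)]
        simp_rw [Kernel.comp_apply]
      have hbig : (μ s).bind (fun x => kernelIter Kinf (n + 1) x)
          = (μ s).bind (fun x => ((kernelIter Kinf n).comp Kinf) x) := by
        rw [kernelIter_succ']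
      have h2 : tvDist ((μ (s + 1)).bind (fun x => kernelIter Kinf n x))
          ((μ s).bind (fun x => kernelIter Kinf (n + 1) x)) ≤ δ s := by
        rw [hmid, hbig]
        refine tvDist_bind_bind_le (μ s) _ _ (fun x => ?_)
        rw [Kernel.comp_apply, Kernel.comp_apply]
        exact (tvDist_bind_le_tvDist (K s x) (Kinf x) (kernelIter Kinf n)).trans (hδle s x)
      have h1 : tvDist (μ ((s + 1) + n)) ((μ (s + 1)).bind (fun x => kernelIter Kinf n x))
          ≤ ∑ j ∈ Finset.range n, δ ((s + 1) + j) := ih (s + 1)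
      have htri := tvDist_triangle (μ ((s + 1) + n))
        ((μ (s + 1)).bind (fun x => kernelIter Kinf n x))
        ((μ s).bind (fun x => kernelIter Kinf (n + 1) x))
      have hsum : ∑ j ∈ Finset.range (n + 1), δ (s + j)
          = (∑ j ∈ Finset.range n, δ ((s + 1) + j)) + δ s := by
        rw [Finset.sum_range_succ' (fun j => δ (s + j)) n]
        congr 1
        exact Finset.sum_congr rfl fun j _ => congrArg δ (by omega)
      rw [e1, hsum]
      exact htri.trans (add_le_add h1 h2)
  -- Ergodicity lemma
  have hE : ∀ n s, tvDist ((μ s).bind (fun x => kernelIter Kinf n x)) π ≤ C * ρ ^ n :=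
    fun n s => tvDist_bind_const_le (μ s) (kernelIter Kinf n) π (fun x => herg n x)
  have hMain : ∀ n s, tvDist (μ (s + n)) π
      ≤ (∑ j ∈ Finset.range n, δ (s + j)) + C * ρ ^ n := by
    intro n s
    haveI := isProbabilityMeasure_bind (μ s) (kernelIter Kinf n)
    exact (tvDist_triangle (μ (s + n)) ((μ s).bind (fun x => kernelIter Kinf n x)) π).trans
      (add_le_add (hT n s) (hE n s))
  have hC : 0 ≤ C := by
    obtain ⟨x⟩ := hΩ
    have := (tvDist_nonneg (kernelIter Kinf 0 x) π).trans (herg 0 x)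
    simpa using this
  rw [Metric.tendsto_atTop]
  intro ε hε
  obtain ⟨n, hn⟩ : ∃ n : ℕ, C * ρ ^ n < ε / 2 := by
    have hten : Tendsto (fun n : ℕ => C * ρ ^ n) atTop (nhds 0) := by
      have := (tendsto_pow_atTop_nhds_zero_of_lt_one (le_of_lt hρ.1) hρ.2).const_mul C
      simpa using this
    exact (hten.eventually (gt_mem_nhds (by positivity : (0:ℝ) < ε / 2))).exists
  have hε' : 0 < ε / (2 * (n + 1)) := by positivity
  obtain ⟨N, hN⟩ : ∃ N : ℕ, ∀ t ≥ N, δ t < ε / (2 * (n + 1)) := by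
    have := hδ.eventually (gt_mem_nhds hε')
    exact eventually_atTop.1 this
  refine ⟨N + n, fun T hTN => ?_⟩
  obtain ⟨s, rfl, hsN⟩ : ∃ s, T = s + n ∧ N ≤ s := ⟨T - n, by omega, by omega⟩
  have hsum : ∑ j ∈ Finset.range n, δ (s + j) ≤ n * (ε / (2 * (n + 1))) := by
    calc ∑ j ∈ Finset.range n, δ (s + j)
        ≤ ∑ _j ∈ Finset.range n, ε / (2 * (n + 1)) :=
          Finset.sum_le_sum fun j _ => le_of_lt (hN (s + j) (by omega))
      _ = n * (ε / (2 * (n + 1))) := by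
          rw [Finset.sum_const, Finset.card_range, nsmul_eq_mul]
  have hb := hMain n s
  have hlt : tvDist (μ (s + n)) π < ε := by
    have h1 : (n : ℝ) * (ε / (2 * (n + 1))) ≤ ε / 2 := by
      have hcast : (0:ℝ) ≤ (n : ℝ) := Nat.cast_nonneg n
      have heq : (n : ℝ) * (ε / (2 * (n + 1))) = ε * n / (2 * (n + 1)) := by ring
      rw [heq, div_le_div_iff₀ (by positivity) (by norm_num : (0:ℝ) < 2)]
      nlinarith [le_of_lt hε]
    linarith [hb, hsum, hn]
  rw [Real.dist_eq, sub_zero, abs_of_nonneg (tvDist_nonneg _ _)]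
  exact hlt
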